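/- Define auxiliary random variables z and w by the mixture conditionals p(z = z₀ | x) = ½ p_1(y = z₀ | x) + ½ p_2(y = -z₀ | x) and p(w = w₀ | x) = ½ p_1(t = w₀ | x) + ½ p_2(t = -w₀ | x). Then E[z | x] = ½(E_{p_1(y|x)}[y] - E_{p_2(y|x)}[y]) and E[w | x] = ½(E_{p_1(t|x)}[t] - E_{p_2(t|x)}[t]); consequently, for every x with p_1(t|x) ≠ p_2(t|x), u(x) = 2 E[z|x] / E[w|x]. -/
import Mathlib


open MeasureTheory
open scoped ENNReal

lemma integrable_id_dirac (a : ℝ) : Integrable (fun t : ℝ => t) (Measure.dirac a) := by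
  refine ⟨aestronglyMeasurable_id, ?_⟩
  rw [HasFiniteIntegral, lintegral_dirac]
  exact ENNReal.coe_lt_top

lemma intg_mix (a : ℝ) (ν νm : Measure ℝ)
    (h1 : Integrable (fun y : ℝ => y) ν) (h2 : Integrable (fun y : ℝ => y) νm) :
    Integrable (fun y : ℝ => y)
      (ENNReal.ofReal a • ν + ENNReal.ofReal (1 - a) • νm) :=
  (h1.smul_measure ENNReal.ofReal_ne_top).add_measure
    (h2.smul_measure ENNReal.ofReal_ne_top)

lemma int_mix (a : ℝ) (ha : 0 ≤ a) (ha' : a ≤ 1) (ν νm : Measure ℝ)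
    (h1 : Integrable (fun y : ℝ => y) ν) (h2 : Integrable (fun y : ℝ => y) νm) :
    (∫ y, y ∂(ENNReal.ofReal a • ν + ENNReal.ofReal (1 - a) • νm))
      = a * (∫ y, y ∂ν) + (1 - a) * (∫ y, y ∂νm) := by
  rw [integral_add_measure (h1.smul_measure ENNReal.ofReal_ne_top)
      (h2.smul_measure ENNReal.ofReal_ne_top),
    integral_smul_measure, integral_smul_measure,
    ENNReal.toReal_ofReal ha, ENNReal.toReal_ofReal (by linarith)]
  simp [smul_eq_mul]

lemma int_map_neg (μ : Measure ℝ) :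
    (∫ z, z ∂(μ.map (fun y : ℝ => -y))) = - ∫ y, y ∂μ := by
  rw [integral_map measurable_neg.aemeasurable ((measurable_id' : Measurable (fun z : ℝ => z)).aestronglyMeasurable)]
  exact integral_neg fun y : ℝ => y

lemma intg_map_neg (μ : Measure ℝ) (h : Integrable (fun y : ℝ => y) μ) :
    Integrable (fun z : ℝ => z) (μ.map (fun y : ℝ => -y)) := by
  rw [integrable_map_measure ((measurable_id' : Measurable (fun z : ℝ => z)).aestronglyMeasurable) measurable_neg.aemeasurable]
  exact h.neg

lemma int_half_mix (μ1 μ2 : Measure ℝ)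
    (h1 : Integrable (fun y : ℝ => y) μ1) (h2 : Integrable (fun y : ℝ => y) μ2) :
    (∫ z, z ∂((2 : ℝ≥0∞)⁻¹ • μ1 + (2 : ℝ≥0∞)⁻¹ • (μ2.map (fun y : ℝ => -y))))
      = (1 / 2) * ((∫ y, y ∂μ1) - ∫ y, y ∂μ2) := by
  rw [integral_add_measure (h1.smul_measure (by simp))
      ((intg_map_neg _ h2).smul_measure (by simp)),
    integral_smul_measure, integral_smul_measure, int_map_neg]
  simp only [ENNReal.toReal_inv, ENNReal.toReal_ofNat, smul_eq_mul]
  ring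

/-- Lemma 2 (disentangled variables `z`, `w`): the outcome kernel is given by
conditional laws `ν1 x = p(y | x, t=1)` and `νm1 x = p(y | x, t=-1)`;
the populations' treatment probabilities are `q1 x = p_1(t=1|x)`,
`q2 x = p_2(t=1|x)`, so `p_k(y|x)` is the corresponding mixture and
`p_k(t|x)` is the mixture of Dirac measures at `1` and `-1`.
The auxiliary laws are `p(z|x) = ½ p_1(y|x) + ½ (neg)_* p_2(y|x)` and
`p(w|x) = ½ p_1(t|x) + ½ (neg)_* p_2(t|x)`.  Then `E[z|x]` and `E[w|x]` are
half the mean differences, and `u(x) = 2 E[z|x] / E[w|x]` whenever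
`q1 x ≠ q2 x`. -/
theorem uplift_eq_ratio_of_z_w {X : Type*} (ν1 νm1 : X → Measure ℝ)
    (q1 q2 : X → ℝ) (x : X)
    (hν1 : IsProbabilityMeasure (ν1 x)) (hνm1 : IsProbabilityMeasure (νm1 x))
    (hint1 : Integrable (fun y : ℝ => y) (ν1 x))
    (hintm1 : Integrable (fun y : ℝ => y) (νm1 x))
    (hq1 : 0 ≤ q1 x) (hq1' : q1 x ≤ 1) (hq2 : 0 ≤ q2 x) (hq2' : q2 x ≤ 1) :
    (∫ z, z ∂((2 : ℝ≥0∞)⁻¹ •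
          (ENNReal.ofReal (q1 x) • ν1 x + ENNReal.ofReal (1 - q1 x) • νm1 x)
        + (2 : ℝ≥0∞)⁻¹ •
          ((ENNReal.ofReal (q2 x) • ν1 x + ENNReal.ofReal (1 - q2 x) • νm1 x).map
            (fun y : ℝ => -y)))
      = (1 / 2) *
        ((∫ y, y ∂(ENNReal.ofReal (q1 x) • ν1 x + ENNReal.ofReal (1 - q1 x) • νm1 x))
          - ∫ y, y ∂(ENNReal.ofReal (q2 x) • ν1 x + ENNReal.ofReal (1 - q2 x) • νm1 x)))
    ∧
    (∫ w, w ∂((2 : ℝ≥0∞)⁻¹ •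
          (ENNReal.ofReal (q1 x) • Measure.dirac (1 : ℝ)
            + ENNReal.ofReal (1 - q1 x) • Measure.dirac (-1 : ℝ))
        + (2 : ℝ≥0∞)⁻¹ •
          ((ENNReal.ofReal (q2 x) • Measure.dirac (1 : ℝ)
            + ENNReal.ofReal (1 - q2 x) • Measure.dirac (-1 : ℝ)).map
            (fun t : ℝ => -t)))
      = (1 / 2) *
        ((∫ t, t ∂(ENNReal.ofReal (q1 x) • Measure.dirac (1 : ℝ)
            + ENNReal.ofReal (1 - q1 x) • Measure.dirac (-1 : ℝ)))
          - ∫ t, t ∂(ENNReal.ofReal (q2 x) • Measure.dirac (1 : ℝ)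
            + ENNReal.ofReal (1 - q2 x) • Measure.dirac (-1 : ℝ))))
    ∧
    (q1 x ≠ q2 x →
      (∫ y, y ∂ν1 x) - (∫ y, y ∂νm1 x) =
        2 * (∫ z, z ∂((2 : ℝ≥0∞)⁻¹ •
              (ENNReal.ofReal (q1 x) • ν1 x + ENNReal.ofReal (1 - q1 x) • νm1 x)
            + (2 : ℝ≥0∞)⁻¹ •
              ((ENNReal.ofReal (q2 x) • ν1 x + ENNReal.ofReal (1 - q2 x) • νm1 x).map
                (fun y : ℝ => -y))))
          / (∫ w, w ∂((2 : ℝ≥0∞)⁻¹ •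
              (ENNReal.ofReal (q1 x) • Measure.dirac (1 : ℝ)
                + ENNReal.ofReal (1 - q1 x) • Measure.dirac (-1 : ℝ))
            + (2 : ℝ≥0∞)⁻¹ •
              ((ENNReal.ofReal (q2 x) • Measure.dirac (1 : ℝ)
                + ENNReal.ofReal (1 - q2 x) • Measure.dirac (-1 : ℝ)).map
                (fun t : ℝ => -t))))) := by
  have hq1'' : (0:ℝ) ≤ 1 - q1 x := by linarith
  have hq2'' : (0:ℝ) ≤ 1 - q2 x := by linarith
  have hd1 : Integrable (fun t : ℝ => t) (Measure.dirac (1:ℝ)) := integrable_id_dirac 1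
  have hdm1 : Integrable (fun t : ℝ => t) (Measure.dirac (-1:ℝ)) := integrable_id_dirac (-1)
  have hZ := int_half_mix _ _ (intg_mix (q1 x) _ _ hint1 hintm1)
    (intg_mix (q2 x) _ _ hint1 hintm1)
  have hW := int_half_mix _ _ (intg_mix (q1 x) _ _ hd1 hdm1)
    (intg_mix (q2 x) _ _ hd1 hdm1)
  refine ⟨hZ, hW, fun hne => ?_⟩
  rw [hZ, hW, int_mix _ hq1 hq1' _ _ hint1 hintm1, int_mix _ hq2 hq2' _ _ hint1 hintm1,
    int_mix _ hq1 hq1' _ _ hd1 hdm1, int_mix _ hq2 hq2' _ _ hd1 hdm1]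
  have h1 : (∫ t, t ∂Measure.dirac (1:ℝ)) = 1 := by simp
  have hm1 : (∫ t, t ∂Measure.dirac (-1:ℝ)) = -1 := by simp
  rw [h1, hm1]
  have hsub : q1 x - q2 x ≠ 0 := sub_ne_zero.mpr hne
  rw [show (1 / 2 * ((q1 x * 1 + (1 - q1 x) * (-1)) - (q2 x * 1 + (1 - q2 x) * (-1))))
      = q1 x - q2 x from by ring]
  rw [eq_div_iff hsub]
  ring
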